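/- One step of de Casteljau subdivision at parameter 1/2 reproduces the same Bézier curve: if P_i^0 = P_i and P_i^{k+1} = (P_i^k + P_{i+1}^k)/2, then the Bézier curve with control points (P_0^0, P_0^1, …, P_0^n) restricted to [0,1] equals the original Bézier curve restricted to [0, 1/2] after reparametrization t ↦ t/2. -/

import Mathlib

open Finset

lemma euclid_sum_apply (s : Finset ℕ) (f : ℕ → EuclideanSpace ℝ (Fin 3)) (x : Fin 3) :
    (∑ i ∈ s, f i) x = ∑ i ∈ s, f i x := by
  induction s using Finset.cons_induction with
  | empty => rfl
  | cons a s ha ih => rw [Finset.sum_cons, Finset.sum_cons, ← ih]; rfl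

/-- The Bézier curve of degree `n` with control points `Q : ℕ → ℝ³`
(only `Q 0, …, Q n` are used). -/
noncomputable def bezier (n : ℕ) (Q : ℕ → EuclideanSpace ℝ (Fin 3)) (t : ℝ) :
    EuclideanSpace ℝ (Fin 3) :=
  ∑ i ∈ Finset.range (n + 1), ((n.choose i : ℝ) * t ^ i * (1 - t) ^ (n - i)) • Q i

lemma pascal_sum (p : ℕ → ℝ) (k i : ℕ) :
    ∑ j ∈ range (k + 2), ((k + 1).choose j : ℝ) * p (i + j) =
      ∑ j ∈ range (k + 1), (k.choose j : ℝ) * p (i + j) +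
        ∑ j ∈ range (k + 1), (k.choose j : ℝ) * p (i + 1 + j) := by
  have e2 : ∑ j ∈ range (k + 2), (k.choose j : ℝ) * p (i + j)
      = (∑ j ∈ range (k + 1), (k.choose (j + 1) : ℝ) * p (i + (j + 1)))
        + (k.choose 0 : ℝ) * p (i + 0) := Finset.sum_range_succ' _ _
  have e3 : ∑ j ∈ range (k + 2), (k.choose j : ℝ) * p (i + j)
      = ∑ j ∈ range (k + 1), (k.choose j : ℝ) * p (i + j) := by
    rw [Finset.sum_range_succ, Nat.choose_succ_self]; simp
  rw [Finset.sum_range_succ' _ (k + 1)]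
  have step : ∀ j ∈ range (k + 1), ((k + 1).choose (j + 1) : ℝ) * p (i + (j + 1))
      = (k.choose (j + 1) : ℝ) * p (i + (j + 1)) + (k.choose j : ℝ) * p (i + 1 + j) := by
    intro j _
    rw [Nat.choose_succ_succ, show i + (j + 1) = i + 1 + j from by omega]
    push_cast; ring
  rw [Finset.sum_congr rfl step, Finset.sum_add_distrib]
  simp only [Nat.choose_zero_right, Nat.cast_one, one_mul, Nat.add_zero] at e2 ⊢
  linarith [e2.symm.trans e3]

lemma d_eq (p : ℕ → ℝ) (d : ℕ → ℕ → ℝ) (hd0 : ∀ i, d 0 i = p i)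
    (hds : ∀ k i, d (k + 1) i = (d k i + d k (i + 1)) / 2) :
    ∀ k i, d k i = (∑ j ∈ range (k + 1), (k.choose j : ℝ) * p (i + j)) / 2 ^ k := by
  intro k
  induction k with
  | zero => intro i; simp [hd0]
  | succ k ih =>
    intro i
    rw [hds, ih i, ih (i + 1), show k + 1 + 1 = k + 2 from rfl, pascal_sum, pow_succ]
    ring

lemma coeff_sum (n j : ℕ) (hj : j < n + 1) (t : ℝ) :
    ∑ k ∈ Ico j (n + 1), (n.choose k : ℝ) * t ^ k * (1 - t) ^ (n - k) / 2 ^ k * (k.choose j)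
      = (n.choose j : ℝ) * (t / 2) ^ j * (1 - t / 2) ^ (n - j) := by
  rw [Finset.sum_Ico_eq_sum_range, show n + 1 - j = (n - j) + 1 from by omega]
  have step : ∀ m ∈ range (n - j + 1),
      (n.choose (j + m) : ℝ) * t ^ (j + m) * (1 - t) ^ (n - (j + m)) / 2 ^ (j + m)
        * ((j + m).choose j)
      = ((n.choose j : ℝ) * (t / 2) ^ j)
        * (((n - j).choose m : ℝ) * (t / 2) ^ m * (1 - t) ^ ((n - j) - m)) := by
    intro m hm
    have hm' : m ≤ n - j := Nat.lt_succ_iff.mp (mem_range.mp hm)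
    have h1 : n.choose (j + m) * ((j + m).choose j) = n.choose j * (n - j).choose m := by
      have := Nat.choose_mul (n := n) (show j ≤ j + m from by omega)
      simpa using this
    have h1' : ((n.choose (j + m)) : ℝ) * ((j + m).choose j)
        = (n.choose j : ℝ) * (n - j).choose m := by exact_mod_cast congrArg Nat.cast h1
    have h2 : n - (j + m) = (n - j) - m := by omega
    have h3 : t ^ (j + m) / 2 ^ (j + m) = (t / 2) ^ j * (t / 2) ^ m := by
      rw [← pow_add, div_pow]
    calc (n.choose (j + m) : ℝ) * t ^ (j + m) * (1 - t) ^ (n - (j + m)) / 2 ^ (j + m)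
          * ((j + m).choose j)
        = ((n.choose (j + m) : ℝ) * ((j + m).choose j)) * (t ^ (j + m) / 2 ^ (j + m))
            * (1 - t) ^ ((n - j) - m) := by rw [h2]; ring
      _ = ((n.choose j : ℝ) * (n - j).choose m) * ((t / 2) ^ j * (t / 2) ^ m)
            * (1 - t) ^ ((n - j) - m) := by rw [h1', h3]
      _ = _ := by ring
  rw [Finset.sum_congr rfl step, ← Finset.mul_sum]
  have hbin : ∑ m ∈ range (n - j + 1),
      ((n - j).choose m : ℝ) * (t / 2) ^ m * (1 - t) ^ ((n - j) - m)
      = (t / 2 + (1 - t)) ^ (n - j) := by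
    rw [add_pow]
    exact Finset.sum_congr rfl fun m _ => by ring
  rw [hbin, show t / 2 + (1 - t) = 1 - t / 2 from by ring]

lemma key (n : ℕ) (p : ℕ → ℝ) (d : ℕ → ℕ → ℝ) (hd0 : ∀ i, d 0 i = p i)
    (hds : ∀ k i, d (k + 1) i = (d k i + d k (i + 1)) / 2) (t : ℝ) :
    ∑ k ∈ range (n + 1), (n.choose k : ℝ) * t ^ k * (1 - t) ^ (n - k) * d k 0
      = ∑ i ∈ range (n + 1), (n.choose i : ℝ) * (t / 2) ^ i * (1 - t / 2) ^ (n - i) * p i := by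
  have hd := d_eq p d hd0 hds
  have e1 : ∀ k ∈ range (n + 1),
      (n.choose k : ℝ) * t ^ k * (1 - t) ^ (n - k) * d k 0
      = ∑ j ∈ range (k + 1),
          (n.choose k : ℝ) * t ^ k * (1 - t) ^ (n - k) / 2 ^ k * (k.choose j) * p j := by
    intro k _
    rw [hd k 0, div_eq_mul_inv, Finset.sum_mul, Finset.mul_sum]
    exact Finset.sum_congr rfl fun j _ => by rw [Nat.zero_add]; ring
  rw [Finset.sum_congr rfl e1]
  have swap := (Finset.sum_Ico_Ico_comm 0 (n + 1)
    (fun j k => (n.choose k : ℝ) * t ^ k * (1 - t) ^ (n - k) / 2 ^ k * (k.choose j) * p j)).symm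
  simp only [← Finset.range_eq_Ico] at swap
  rw [swap]
  refine Finset.sum_congr rfl fun j hj => ?_
  rw [← Finset.sum_mul, coeff_sum n j (mem_range.mp hj)]

/-- One step of de Casteljau subdivision at parameter 1/2: the Bézier curve on the
control points `P⁰₀, P¹₀, …, Pⁿ₀` equals the original Bézier curve reparametrized by
`t ↦ t/2`.  Here `D k i = Pᵏᵢ` with `D 0 i = P i` and
`D (k+1) i = (D k i + D k (i+1))/2`. -/
theorem deCasteljau_subdivision_half (n : ℕ) (P : ℕ → EuclideanSpace ℝ (Fin 3))
    (D : ℕ → ℕ → EuclideanSpace ℝ (Fin 3))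
    (hD0 : ∀ i, D 0 i = P i)
    (hDs : ∀ k i, D (k + 1) i = ((2:ℝ)⁻¹) • (D k i + D k (i + 1))) :
    ∀ t ∈ Set.Icc (0:ℝ) 1,
      bezier n (fun i => D i 0) t = bezier n P (t / 2) := by
  intro t _
  ext x
  have hb : ∀ (Q : ℕ → EuclideanSpace ℝ (Fin 3)) (s : ℝ),
      bezier n Q s x = ∑ i ∈ range (n + 1),
        (n.choose i : ℝ) * s ^ i * (1 - s) ^ (n - i) * Q i x := by
    intro Q s
    rw [bezier, euclid_sum_apply]
    exact Finset.sum_congr rfl fun i _ => by simp [PiLp.smul_apply]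
  rw [hb, hb]
  exact key n (fun i => P i x) (fun k i => D k i x)
    (fun i => congrArg (fun v => v x) (hD0 i))
    (fun k i => by
      show D (k + 1) i x = (D k i x + D k (i + 1) x) / 2
      have h := congrArg (fun v => v x) (hDs k i)
      simp only [PiLp.smul_apply, PiLp.add_apply, smul_eq_mul] at h
      rw [h]; ring) t
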